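/- Let K be a field, let V and W be finite-dimensional K-vector spaces, let k ∈ ℤ, and let (F_j)_{j∈ℤ} and (G_j)_{j∈ℤ} be decreasing filtrations of V and W by subspaces which are exhaustive (⋃_j F_j = V and ⋃_j G_j = W) and separated (⋂_j F_j = 0 and ⋂_j G_j = 0). Let f : V → W be a linear map with f(F_j) ⊆ G_{j+k} for every j ∈ ℤ, and for each j let gr_j f : F_j/F_{j+1} → G_{j+k}/G_{j+k+1} denote the induced linear map on the associated graded pieces. Then dim(range f) ≥ Σ_{j∈ℤ} dim(range gr_j f), where the sum has only finitely many nonzero terms. -/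

import Mathlib

/-- The map induced on the associated graded pieces by a filtered linear map `f` of
degree `k`: `gr_j f : F j ⧸ F (j+1) →ₗ G (j+k) ⧸ G (j+k+1)`. -/
noncomputable def grMap {K V W : Type*} [Field K] [AddCommGroup V] [Module K V]
    [AddCommGroup W] [Module K W]
    (F : ℤ → Submodule K V) (G : ℤ → Submodule K W) (k : ℤ)
    (f : V →ₗ[K] W) (hf : ∀ j : ℤ, ∀ x ∈ F j, f x ∈ G (j + k)) (j : ℤ) :
    (↥(F j) ⧸ (Submodule.comap (F j).subtype (F (j + 1)))) →ₗ[K]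
      (↥(G (j + k)) ⧸ (Submodule.comap (G (j + k)).subtype (G (j + k + 1)))) :=
  Submodule.mapQ _ _ (f.restrict (hf j)) (by
    intro x hx
    have hx' : (x : V) ∈ F (j + 1) := hx
    have hfx : f (x : V) ∈ G (j + 1 + k) := hf (j + 1) _ hx'
    have : f (x : V) ∈ G (j + k + 1) := by
      rwa [show j + 1 + k = j + k + 1 by ring] at hfx
    simpa [Submodule.mem_comap, LinearMap.restrict_apply] using this)

private lemma gr_rank_le {K V W : Type*} [Field K] [AddCommGroup V] [Module K V]
    [AddCommGroup W] [Module K W] [FiniteDimensional K W]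
    (F : ℤ → Submodule K V) (G : ℤ → Submodule K W)
    (hGmono : ∀ j : ℤ, G (j + 1) ≤ G j)
    (k : ℤ) (f : V →ₗ[K] W) (hf : ∀ j : ℤ, ∀ x ∈ F j, f x ∈ G (j + k)) (j : ℤ) :
    Module.finrank K ↥(LinearMap.range (grMap F G k f hf j)) +
      Module.finrank K ↥(LinearMap.range f ⊓ G (j + k + 1)) ≤
    Module.finrank K ↥(LinearMap.range f ⊓ G (j + k)) := by
  set R := LinearMap.range f with hR
  set q : Submodule K W := R ⊓ G (j + k) with hq
  set p : Submodule K W := R ⊓ G (j + k + 1) with hp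
  have hpq : p ≤ q := inf_le_inf_left _ (hGmono (j + k))
  have hqG : q ≤ G (j + k) := inf_le_right
  set g : ↥q →ₗ[K] _ :=
    (Submodule.comap (G (j + k)).subtype (G (j + k + 1))).mkQ ∘ₗ Submodule.inclusion hqG
    with hg
  have hrange : LinearMap.range (grMap F G k f hf j) ≤ LinearMap.range g := by
    rintro y ⟨x, rfl⟩
    obtain ⟨x, rfl⟩ := Submodule.Quotient.mk_surjective _ x
    refine ⟨⟨f x, ⟨⟨x, rfl⟩, hf j x x.2⟩⟩, ?_⟩
    simp only [grMap, Submodule.mapQ_apply, hg, LinearMap.comp_apply]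
    rfl
  have h1 : Module.finrank K ↥(LinearMap.range (grMap F G k f hf j)) ≤
      Module.finrank K ↥(LinearMap.range g) := Submodule.finrank_mono hrange
  have h2 : Module.finrank K ↥(LinearMap.range g) + Module.finrank K ↥(LinearMap.ker g)
      = Module.finrank K ↥q := LinearMap.finrank_range_add_finrank_ker g
  have h3 : Module.finrank K ↥p ≤ Module.finrank K ↥(LinearMap.ker g) := by
    have einj : Function.Injective (Submodule.inclusion hpq) :=
      Submodule.inclusion_injective hpq
    have hsub : LinearMap.range (Submodule.inclusion hpq) ≤ LinearMap.ker g := by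
      rintro y ⟨x, rfl⟩
      simp only [LinearMap.mem_ker, hg, LinearMap.comp_apply, Submodule.mkQ_apply,
        Submodule.Quotient.mk_eq_zero, Submodule.mem_comap, Submodule.subtype_apply,
        Submodule.coe_inclusion]
      exact x.2.2
    calc Module.finrank K ↥p
        = Module.finrank K ↥(LinearMap.range (Submodule.inclusion hpq)) :=
          ((Submodule.inclusion hpq).finrank_range_of_inj einj).symm
      _ ≤ _ := Submodule.finrank_mono hsub
  omega

/-- For a filtered map `f` of degree `k` between finite-dimensional spaces with
exhaustive, separated decreasing filtrations, the rank of `f` is at least the sum of the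
ranks of the graded maps `gr_j f` (only finitely many of which are nonzero). -/
theorem stmt_9 {K V W : Type*} [Field K] [AddCommGroup V] [Module K V]
    [AddCommGroup W] [Module K W] [FiniteDimensional K V] [FiniteDimensional K W]
    (F : ℤ → Submodule K V) (G : ℤ → Submodule K W)
    (hFmono : ∀ j : ℤ, F (j + 1) ≤ F j) (hGmono : ∀ j : ℤ, G (j + 1) ≤ G j)
    (hFexh : ∀ v : V, ∃ j : ℤ, v ∈ F j) (hGexh : ∀ w : W, ∃ j : ℤ, w ∈ G j)
    (hFsep : (⨅ j : ℤ, F j) = ⊥) (hGsep : (⨅ j : ℤ, G j) = ⊥)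
    (k : ℤ) (f : V →ₗ[K] W) (hf : ∀ j : ℤ, ∀ x ∈ F j, f x ∈ G (j + k)) :
    {j : ℤ | Module.finrank K ↥(LinearMap.range (grMap F G k f hf j)) ≠ 0}.Finite ∧
    ∑ᶠ j : ℤ, Module.finrank K ↥(LinearMap.range (grMap F G k f hf j)) ≤
      Module.finrank K ↥(LinearMap.range f) := by
  classical
  have hGanti : Antitone G := antitone_int_of_succ_le hGmono
  set R := LinearMap.range f with hR
  set r : ℤ → ℕ := fun j => Module.finrank K ↥(LinearMap.range (grMap F G k f hf j)) with hr
  set d : ℤ → ℕ := fun i => Module.finrank K ↥(R ⊓ G i) with hd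
  have key : ∀ j : ℤ, r j + d (j + k + 1) ≤ d (j + k) := fun j =>
    gr_rank_le F G hGmono k f hf j
  -- exhaustivity: range f is contained in some G a
  have hex : ∃ a : ℤ, R ≤ G a := by
    obtain ⟨S, hS⟩ := IsNoetherian.noetherian R
    choose jw hjw using hGexh
    by_cases hS0 : S.Nonempty
    · refine ⟨S.inf' hS0 jw, ?_⟩
      rw [← hS, Submodule.span_le]
      intro x hx
      exact hGanti (Finset.inf'_le jw hx) (hjw x)
    · refine ⟨0, ?_⟩
      rw [← hS, Finset.not_nonempty_iff_eq_empty.mp hS0]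
      simp
  obtain ⟨a, ha⟩ := hex
  -- separation: range f meets some G b trivially
  have hsep : ∃ b : ℤ, R ⊓ G b = ⊥ := by
    have hne : (Set.range d).Nonempty := ⟨d 0, 0, rfl⟩
    obtain ⟨b, hb⟩ := Nat.sInf_mem hne
    have hstable : ∀ j : ℤ, b ≤ j → R ⊓ G j = R ⊓ G b := by
      intro j hj
      refine Submodule.eq_of_le_of_finrank_le (inf_le_inf_left _ (hGanti hj)) ?_
      rw [show Module.finrank K ↥(R ⊓ G b) = d b from rfl, hb]
      exact Nat.sInf_le ⟨j, rfl⟩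
    refine ⟨b, le_bot_iff.mp ?_⟩
    rw [← hGsep]
    refine le_iInf fun j => ?_
    rcases le_total j b with h | h
    · exact le_trans inf_le_right (hGanti h)
    · exact le_trans (le_of_eq (hstable j h).symm) inf_le_right
  obtain ⟨b, hb⟩ := hsep
  have hda : ∀ i : ℤ, i ≤ a → d i = Module.finrank K ↥R := by
    intro i hi
    have : R ⊓ G i = R := inf_eq_left.mpr (le_trans ha (hGanti hi))
    rw [hd]; simp only []; rw [this]
  have hdb : ∀ i : ℤ, b ≤ i → d i = 0 := by
    intro i hi
    have : R ⊓ G i = ⊥ := le_bot_iff.mp (hb ▸ inf_le_inf_left _ (hGanti hi))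
    rw [hd]; simp only []; rw [this, finrank_bot]
  set lo : ℤ := min a b - k with hlo
  set n : ℕ := (b - min a b).toNat with hn
  have hlon : lo + (n : ℤ) + k = b := by
    rw [hlo, hn, Int.toNat_of_nonneg (by omega : (0:ℤ) ≤ b - min a b)]; ring
  have hlok : lo + k ≤ a := by rw [hlo]; omega
  -- support is contained in the window
  have hsupp : Function.support r ⊆ ↑((Finset.range n).map
      ⟨fun i : ℕ => lo + i, fun i i' h => Nat.cast_inj.mp (add_left_cancel h)⟩) := by
    intro j hj
    simp only [Function.mem_support] at hj
    simp only [Finset.coe_map, Finset.coe_range, Set.mem_image, Set.mem_Iio,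
      Function.Embedding.coeFn_mk]
    have hwin : lo ≤ j ∧ j < lo + (n : ℤ) := by
      constructor
      · by_contra hcon
        push_neg at hcon
        have h1 := key j
        have h2 := hda (j + k) (by omega)
        have h3 := hda (j + k + 1) (by omega)
        omega
      · by_contra hcon
        push_neg at hcon
        have h1 := key j
        have h2 := hdb (j + k) (by omega)
        omega
    refine ⟨(j - lo).toNat, ?_, ?_⟩
    · omega
    · show lo + (((j - lo).toNat : ℕ) : ℤ) = j; rw [Int.toNat_of_nonneg (by omega)]; ring
  constructor
  · exact Set.Finite.subset (Finset.finite_toSet _) hsupp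
  · rw [finsum_eq_finset_sum_of_support_subset r hsupp, Finset.sum_map]
    show (∑ i ∈ Finset.range n, r (lo + (i : ℤ))) ≤ _
    have tel : ∀ m : ℕ, (∑ i ∈ Finset.range m, r (lo + i)) + d (lo + (m : ℤ) + k)
        ≤ d (lo + k) := by
      intro m
      induction m with
      | zero => simp
      | succ m ih =>
        rw [Finset.sum_range_succ]
        have h1 := key (lo + (m : ℤ))
        have h2 : lo + ((m : ℕ) + 1 : ℕ) + k = lo + (m : ℤ) + k + 1 := by push_cast; ring
        rw [h2]
        omega
    have := tel n
    rw [hlon, hdb b le_rfl, hda (lo + k) hlok] at this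
    omega
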